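/- Lipschitz sup-from-L¹ bound (Lemma 7): Let D ⊂ ℝ^{d+1} be a bounded domain with positive regularity constant R_D := inf_{z ∈ D, r > 0} |B(z, r) ∩ D| / min{ |D|, π^{(d+1)/2} r^{d+1} / Γ((d+1)/2 + 1) }, where B(z,r) is the closed Euclidean ball of radius r centered at z, |S| denotes the Lebesgue measure of S, and Γ is the Gamma function. Let q ∈ C⁰(D̄) be l₀-Lipschitz continuous on D̄ with l₀ > 0. Then sup_{z ∈ D} |q(z)| ≤ max{ 2‖q‖_{L¹(D̄)} / (R_D |D|), 2 l₀ · ( ‖q‖_{L¹(D̄)} · Γ((d+1)/2 + 1) / (l₀ R_D π^{(d+1)/2}) )^{1/(d+2)} }, where ‖q‖_{L¹(D̄)} = ∫_{D̄} |q(z)| dz. -/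

import Mathlib

open Set MeasureTheory

/-- **Lipschitz sup-from-L¹ bound (Lemma 7)**: on a bounded domain `D ⊂ ℝ^{d+1}`
with positive regularity constant `R_D`, any `l₀`-Lipschitz continuous function `q`
on `D̄` satisfies
`sup_D |q| ≤ max{ 2‖q‖_{L¹(D̄)}/(R_D |D|),
                  2l₀ (‖q‖_{L¹(D̄)} Γ((d+1)/2+1)/(l₀ R_D π^{(d+1)/2}))^{1/(d+2)} }`. -/
theorem lipschitz_sup_from_L1_bound
    (d : ℕ)
    (D : Set (EuclideanSpace ℝ (Fin (d + 1))))
    (hDo : IsOpen D) (hDne : D.Nonempty) (hDb : Bornology.IsBounded D)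
    (R_D : ℝ)
    (hRD : R_D = sInf {t : ℝ | ∃ z ∈ D, ∃ r : ℝ, 0 < r ∧
      t = (volume (Metric.closedBall z r ∩ D)).toReal /
            min ((volume D).toReal)
              (Real.pi ^ (((d : ℝ) + 1) / 2) * r ^ (d + 1) /
                Real.Gamma (((d : ℝ) + 1) / 2 + 1))})
    (hRDpos : 0 < R_D)
    (q : EuclideanSpace ℝ (Fin (d + 1)) → ℝ)
    (hq0 : ContinuousOn q (closure D))
    (l₀ : ℝ) (hl₀ : 0 < l₀)
    (hqLip : ∀ z ∈ closure D, ∀ z' ∈ closure D, |q z - q z'| ≤ l₀ * dist z z') :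
    sSup ((fun z => |q z|) '' D) ≤
      max (2 * (∫ z in closure D, |q z|) / (R_D * (volume D).toReal))
        (2 * l₀ *
          ((∫ z in closure D, |q z|) * Real.Gamma (((d : ℝ) + 1) / 2 + 1) /
              (l₀ * R_D * Real.pi ^ (((d : ℝ) + 1) / 2))) ^ ((1 : ℝ) / ((d : ℝ) + 2))) := by
  have hp : (0:ℝ) < Real.pi ^ (((d : ℝ) + 1) / 2) := Real.rpow_pos_of_pos Real.pi_pos _
  have hΓ : 0 < Real.Gamma (((d : ℝ) + 1) / 2 + 1) := Real.Gamma_pos_of_pos (by positivity)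
  set πp := Real.pi ^ (((d : ℝ) + 1) / 2) with hπp
  set Γv := Real.Gamma (((d : ℝ) + 1) / 2 + 1) with hΓv
  set L := ∫ z in closure D, |q z| with hL
  have hK : IsCompact (closure D) := hDb.isCompact_closure
  have hInt : IntegrableOn (fun z => |q z|) (closure D) :=
    (hq0.abs).integrableOn_compact hK
  have hLnn : 0 ≤ L := by
    apply integral_nonneg
    intro x; exact abs_nonneg _
  have hDvol : 0 < (volume D).toReal := by
    refine ENNReal.toReal_pos (hDo.measure_pos volume hDne).ne' ?_
    exact (hDb.measure_lt_top).ne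
  -- RHS is nonnegative
  have hRHS0 : 0 ≤ 2 * L / (R_D * (volume D).toReal) := by positivity
  have hRHS : 0 ≤ max (2 * L / (R_D * (volume D).toReal))
      (2 * l₀ * (L * Γv / (l₀ * R_D * πp)) ^ ((1 : ℝ) / ((d : ℝ) + 2))) :=
    le_trans hRHS0 (le_max_left _ _)
  apply Real.sSup_le _ hRHS
  rintro x ⟨z, hz, rfl⟩
  simp only
  rcases eq_or_lt_of_le (abs_nonneg (q z)) with h0 | h0
  · rw [← h0]; exact hRHS
  -- the radius
  set r := |q z| / (2 * l₀) with hr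
  have hrpos : 0 < r := by positivity
  set B := Metric.closedBall z r ∩ D with hB
  have hBm : MeasurableSet B := (measurableSet_closedBall).inter hDo.measurableSet
  have hBsub : B ⊆ closure D := fun x hx => subset_closure hx.2
  have hBfin : volume B ≠ ⊤ :=
    ((measure_mono hBsub).trans_lt hK.measure_lt_top).ne
  -- lower bound on the integral over B
  have hlow : |q z| / 2 * (volume B).toReal ≤ ∫ x in B, |q x| := by
    apply setIntegral_ge_of_const_le_real hBm hBfin
    · intro x hx
      have hxD : x ∈ closure D := hBsub hx
      have hzD : z ∈ closure D := subset_closure hz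
      have hdist : dist z x ≤ r := by
        rw [dist_comm]; exact hx.1
      have h1 : |q z - q x| ≤ l₀ * r :=
        le_trans (hqLip z hzD x hxD) (by nlinarith)
      have h2 : |q z| - |q x| ≤ l₀ * r := le_trans (abs_sub_abs_le_abs_sub _ _) h1
      have : l₀ * r = |q z| / 2 := by
        rw [hr]; field_simp
      linarith
    · exact hInt.mono_set hBsub
  have hmono : ∫ x in B, |q x| ≤ L := by
    apply setIntegral_mono_set hInt
    · filter_upwards with x using abs_nonneg _
    · exact HasSubset.Subset.eventuallyLE hBsub
  -- R_D lower bound on |B|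
  have hden : 0 < min ((volume D).toReal) (πp * r ^ (d + 1) / Γv) :=
    lt_min hDvol (by positivity)
  have hRle : R_D ≤ (volume B).toReal / min ((volume D).toReal) (πp * r ^ (d + 1) / Γv) := by
    rw [hRD]
    apply csInf_le
    · refine ⟨0, ?_⟩
      rintro t ⟨z', _, r', hr', rfl⟩
      have hden' : 0 < min ((volume D).toReal) (πp * r' ^ (d + 1) / Γv) :=
        lt_min hDvol (by positivity)
      positivity
    · exact ⟨z, hz, r, hrpos, rfl⟩
  have hvolB : R_D * min ((volume D).toReal) (πp * r ^ (d + 1) / Γv) ≤ (volume B).toReal :=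
    (le_div_iff₀ hden).mp hRle
  -- combine
  have hkey : |q z| / 2 * (R_D * min ((volume D).toReal) (πp * r ^ (d + 1) / Γv)) ≤ L := by
    have := mul_le_mul_of_nonneg_left hvolB (by positivity : (0:ℝ) ≤ |q z| / 2)
    linarith
  rcases min_cases ((volume D).toReal) (πp * r ^ (d + 1) / Γv) with ⟨hmin, _⟩ | ⟨hmin, _⟩
  · rw [hmin] at hkey
    refine le_trans ?_ (le_max_left _ _)
    rw [le_div_iff₀ (by positivity : (0:ℝ) < R_D * (volume D).toReal)]
    nlinarith
  · rw [hmin] at hkey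
    refine le_trans ?_ (le_max_right _ _)
    have hqzr : |q z| = 2 * l₀ * r := by
      rw [hr]; field_simp
    have hrpow : r ^ (d + 2) ≤ L * Γv / (l₀ * R_D * πp) := by
      rw [le_div_iff₀ (by positivity)]
      have : |q z| / 2 * (R_D * (πp * r ^ (d + 1) / Γv)) =
          (l₀ * R_D * πp) * r ^ (d + 2) / Γv := by
        rw [hqzr]; field_simp; ring
      rw [this] at hkey
      rw [div_le_iff₀ hΓ] at hkey
      linarith
    have hC : (0:ℝ) ≤ L * Γv / (l₀ * R_D * πp) := by positivity
    have hrle : r ≤ (L * Γv / (l₀ * R_D * πp)) ^ ((1 : ℝ) / ((d : ℝ) + 2)) := by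
      have h1 : (r ^ (d + 2) : ℝ) ^ ((1 : ℝ) / ((d : ℝ) + 2)) ≤
          (L * Γv / (l₀ * R_D * πp)) ^ ((1 : ℝ) / ((d : ℝ) + 2)) :=
        Real.rpow_le_rpow (by positivity) hrpow (by positivity)
      calc r = ((r ^ (d + 2) : ℝ)) ^ ((1 : ℝ) / ((d : ℝ) + 2)) := by
              rw [← Real.rpow_natCast r (d + 2), ← Real.rpow_mul hrpos.le]
              norm_num
              rw [mul_inv_cancel₀ (by positivity : ((d:ℝ) + 2) ≠ 0), Real.rpow_one]
        _ ≤ _ := h1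
    calc |q z| = 2 * l₀ * r := hqzr
      _ ≤ 2 * l₀ * (L * Γv / (l₀ * R_D * πp)) ^ ((1 : ℝ) / ((d : ℝ) + 2)) := by
          exact mul_le_mul_of_nonneg_left hrle (by positivity)
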